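/- Let k > 0, δ > 0, and let c : [0,∞) → ℝ be continuous with c(t) ≥ δ for all t ≥ 0. Let η : [0,∞) → ℝ be differentiable and satisfy η′(t) = −c(t)·k·(e^{η(t)} − 1) for all t ≥ 0. Then the function t ↦ k·(e^{η(t)} − η(t) − 1) is nonincreasing on [0,∞), and η(t) → 0 as t → ∞. In particular, the zero equilibrium is globally asymptotically stable. -/

import Mathlib

open Filter

/-- Reduced scalar dynamics underlying Theorem 3.6 (mosquito model under the
aquatic-stage feedback control): if `η′(t) = −c(t)·k·(e^{η(t)} − 1)` with `c`
continuous and `c(t) ≥ δ > 0`, then the Lyapunov function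
`t ↦ k(e^{η(t)} − η(t) − 1)` is nonincreasing on `[0,∞)` and `η(t) → 0` as
`t → ∞` (global asymptotic stability of the zero equilibrium). -/
theorem stmt14 (k δ : ℝ) (hk : 0 < k) (hδ : 0 < δ)
    (c : ℝ → ℝ) (hc_cont : ContinuousOn c (Set.Ici 0))
    (hc : ∀ t, 0 ≤ t → δ ≤ c t)
    (η : ℝ → ℝ)
    (hη : ∀ t, 0 ≤ t →
      HasDerivWithinAt η (-(c t) * k * (Real.exp (η t) - 1)) (Set.Ici 0) t) :
    AntitoneOn (fun t => k * (Real.exp (η t) - η t - 1)) (Set.Ici 0) ∧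
    Tendsto η atTop (nhds 0) := by
  have hηc : ContinuousOn η (Set.Ici 0) := fun t ht => (hη t ht).continuousWithinAt
  have hη' : ∀ t, 0 < t → HasDerivAt η (-(c t) * k * (Real.exp (η t) - 1)) t :=
    fun t ht => (hη t ht.le).hasDerivAt (Ici_mem_nhds ht)
  -- Part 1: Lyapunov function antitone
  have part1 : AntitoneOn (fun t => k * (Real.exp (η t) - η t - 1)) (Set.Ici 0) := by
    have hderiv : ∀ t, 0 < t → HasDerivAt (fun s => k * (Real.exp (η s) - η s - 1))
        (k * ((Real.exp (η t) - 1) * (-(c t) * k * (Real.exp (η t) - 1)))) t := by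
      intro t ht
      have h1 := hη' t ht
      have h2 : HasDerivAt (fun s => Real.exp (η s))
          (Real.exp (η t) * (-(c t) * k * (Real.exp (η t) - 1))) t := h1.exp
      have h3 := ((h2.sub h1).sub (hasDerivAt_const t (1:ℝ))).const_mul k
      exact h3.congr_deriv (by ring)
    apply antitoneOn_of_deriv_nonpos (convex_Ici 0)
    · exact continuousOn_const.mul (((Real.continuous_exp.comp_continuousOn hηc).sub hηc).sub continuousOn_const)
    · intro x hx
      rw [interior_Ici] at hx
      exact (hderiv x hx).differentiableAt.differentiableWithinAt
    · intro x hx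
      rw [interior_Ici] at hx
      rw [(hderiv x hx).deriv]
      have hcx : δ ≤ c x := hc x hx.le
      nlinarith [sq_nonneg (Real.exp (η x) - 1), sq_nonneg (k * (Real.exp (η x) - 1))]
  refine ⟨part1, ?_⟩
  -- substitution y = 1 - exp(-η)
  set y : ℝ → ℝ := fun t => 1 - Real.exp (-η t) with hy_def
  have key : ∀ t, Real.exp (-η t) * Real.exp (η t) = 1 := by
    intro t; rw [← Real.exp_add]; simp
  have hy' : ∀ t, 0 < t → HasDerivAt y (-(c t) * k * y t) t := by
    intro t ht
    have h1 := hη' t ht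
    have h2 : HasDerivAt (fun s => Real.exp (-η s))
        (Real.exp (-η t) * -(-(c t) * k * (Real.exp (η t) - 1))) t := h1.neg.exp
    have h3 := (hasDerivAt_const t (1:ℝ)).sub h2
    refine h3.congr_deriv ?_
    simp only [hy_def]
    linear_combination -(c t * k) * key t
  have hyc : ContinuousOn y (Set.Ici 0) :=
    continuousOn_const.sub (Real.continuous_exp.comp_continuousOn hηc.neg)
  -- h(t) = y(t)^2 * exp(2δk t) is antitone on Ici 0
  set g : ℝ → ℝ := fun t => y t ^ 2 * Real.exp (2 * δ * k * t) with hg_def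
  have hg_anti : AntitoneOn g (Set.Ici 0) := by
    have hderiv : ∀ t, 0 < t → HasDerivAt g
        (2 * y t * (-(c t) * k * y t) * Real.exp (2 * δ * k * t)
          + y t ^ 2 * (Real.exp (2 * δ * k * t) * (2 * δ * k))) t := by
      intro t ht
      have h1 : HasDerivAt (fun s => y s ^ 2) (2 * y t * (-(c t) * k * y t)) t := by
        have := (hy' t ht).pow 2
        exact this.congr_deriv (by ring)
      have h2 : HasDerivAt (fun s => Real.exp (2 * δ * k * s))
          (Real.exp (2 * δ * k * t) * (2 * δ * k)) t := by
        have := ((hasDerivAt_id t).const_mul (2 * δ * k)).exp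
        simp only [id_eq, mul_one] at this
        exact this
      exact h1.mul h2
    apply antitoneOn_of_deriv_nonpos (convex_Ici 0)
    · exact (hyc.pow 2).mul (Real.continuous_exp.comp (continuous_const.mul continuous_id)).continuousOn
    · intro x hx
      rw [interior_Ici] at hx
      exact (hderiv x hx).differentiableAt.differentiableWithinAt
    · intro x hx
      rw [interior_Ici] at hx
      rw [(hderiv x hx).deriv]
      have hcx : δ ≤ c x := hc x hx.le
      have hpos : (0:ℝ) < Real.exp (2 * δ * k * x) := Real.exp_pos _
      nlinarith [mul_nonneg (mul_nonneg (mul_nonneg hk.le (sq_nonneg (y x))) hpos.le)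
        (sub_nonneg.2 hcx)]
  -- squeeze: y t ^ 2 ≤ y 0 ^2 * exp(-2δk t)
  have hbound : ∀ t, 0 ≤ t → y t ^ 2 ≤ y 0 ^ 2 * Real.exp (-(2 * δ * k) * t) := by
    intro t ht
    have := hg_anti (Set.self_mem_Ici) ht ht
    simp only [hg_def, mul_zero, Real.exp_zero, mul_one] at this
    have hpos : (0:ℝ) < Real.exp (2 * δ * k * t) := Real.exp_pos _
    rw [neg_mul, Real.exp_neg, ← div_eq_mul_inv, le_div_iff₀ hpos]
    exact this
  have hsq : Tendsto (fun t => y t ^ 2) atTop (nhds 0) := by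
    have hlim : Tendsto (fun t => y 0 ^ 2 * Real.exp (-(2 * δ * k) * t)) atTop (nhds 0) := by
      have : Tendsto (fun t : ℝ => Real.exp (-(2 * δ * k) * t)) atTop (nhds 0) := by
        apply Real.tendsto_exp_atBot.comp
        apply Tendsto.const_mul_atTop_of_neg
        · simpa using mul_pos (mul_pos two_pos hδ) hk
        · exact tendsto_id
      simpa using this.const_mul (y 0 ^ 2)
    apply squeeze_zero' (Filter.eventually_atTop.2 ⟨0, fun t ht => sq_nonneg _⟩)
      (Filter.eventually_atTop.2 ⟨0, fun t ht => hbound t ht⟩) hlim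
  have hy0 : Tendsto y atTop (nhds 0) := by
    have habs : Tendsto (fun t => |y t|) atTop (nhds 0) := by
      have := (Real.continuous_sqrt.tendsto 0).comp hsq
      simpa [Function.comp_def, Real.sqrt_sq_eq_abs] using this
    exact tendsto_zero_iff_abs_tendsto_zero y |>.2 habs
  -- conclude η → 0
  have hexp : Tendsto (fun t => 1 - y t) atTop (nhds 1) := by
    simpa using (tendsto_const_nhds.sub hy0 : Tendsto (fun t => (1:ℝ) - y t) atTop (nhds (1 - 0)))
  have hlog : Tendsto (fun t => -Real.log (1 - y t)) atTop (nhds 0) := by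
    have := ((Real.continuousAt_log one_ne_zero).tendsto.comp hexp).neg
    simpa using this
  convert hlog using 1
  funext t
  simp only [hy_def]
  rw [sub_sub_cancel, Real.log_exp, neg_neg]
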